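/- Let 0 < μ ≤ L, σ^2 ≥ 0, r = 1 - μ/L, β = σ^2/(2μL). For any q > 0 and any h satisfying h ≥ 2/(2L + σ^2/(μ q)), we have (1 - μ h) q ≤ q (β + r q)/(β + q). -/

import Mathlib

theorem stmt_9 (μ L σ r β : ℝ) (hμ : 0 < μ) (hμL : μ ≤ L) (hσ : 0 < σ)
    (hr : r = 1 - μ/L) (hβ : β = σ^2 / (2 * μ * L))
    (q : ℝ) (hq : 0 < q)
    (h : ℝ) (hh : h ≥ 2 / (2 * L + σ^2 / (μ * q))) :
    (1 - μ * h) * q ≤ q * (β + r * q) / (β + q) := by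
  have hL : 0 < L := lt_of_lt_of_le hμ hμL
  subst hr hβ
  have hd : 0 < 2 * L + σ^2 / (μ * q) := by positivity
  have hβq : 0 < σ^2 / (2 * μ * L) + q := by positivity
  rw [ge_iff_le, div_le_iff₀ hd] at hh
  field_simp at hh
  rw [le_div_iff₀ hβq]
  field_simp
  nlinarith [mul_le_mul_of_nonneg_left hh (by positivity : (0:ℝ) ≤ μ * (2 * μ * L * L)), sq_nonneg σ, mul_pos hμ hq, mul_pos hL hq]
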